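/- Let P'' ≤ P' be finite GR-processes of a net N (P'' a prefix of P'), and let σ'' be a finite firing sequence compatible with P''. Then there exists a finite firing sequence σ₀ compatible with P' such that σ'' ≤ σ₀. -/

import Mathlib

open Relation

/-- A place/transition net with place type `S` and transition type `T`. -/
structure Net (S T : Type) where
  /-- arc weight from place `s` to transition `t` -/
  pre : T → S → ℕ
  /-- arc weight from transition `t` to place `s` -/
  post : T → S → ℕ
  /-- the initial marking -/
  M0 : S → ℕ
  pre_finite : ∀ t, {s | pre t s > 0}.Finite
  pre_nonempty : ∀ t, ∃ s, pre t s > 0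
  post_finite : ∀ t, {s | post t s > 0}.Finite

namespace Net

variable {S T : Type} (N : Net S T)

/-- the singleton step `{t}` is enabled at marking `M` -/
def Enabled (t : T) (M : S → ℕ) : Prop := ∀ s, N.pre t s ≤ M s

/-- the two-element multiset step `{t,u}` is enabled at marking `M` -/
def Enabled2 (t u : T) (M : S → ℕ) : Prop := ∀ s, N.pre t s + N.pre u s ≤ M s

/-- firing transition `t` leads from marking `M` to marking `M'` -/
def Fires (t : T) (M M' : S → ℕ) : Prop :=
  N.Enabled t M ∧ M' = fun s => M s - N.pre t s + N.post t s

/-- firing the finite transition sequence `σ` leads from `M` to `M'` -/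
inductive FiresList : (S → ℕ) → List T → (S → ℕ) → Prop
  | nil (M : S → ℕ) : FiresList M [] M
  | cons {M M₁ M' : S → ℕ} {t : T} {σ : List T} :
      N.Fires t M M₁ → FiresList M₁ σ M' → FiresList M (t :: σ) M'

/-- a marking is reachable -/
def Reachable (M : S → ℕ) : Prop := ∃ σ : List T, N.FiresList N.M0 σ M

/-- `σ` is a finite firing sequence of `N` -/
def FS (σ : List T) : Prop := ∃ M, N.FiresList N.M0 σ M

/-- `σ` is a (possibly infinite) firing sequence of `N` -/
def FSInf (σ : Stream'.Seq T) : Prop := ∀ n, N.FS (σ.take n)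

/-- adjacency `≡₀` on finite firing sequences -/
def Adj (σ ρ : List T) : Prop :=
  ∃ (α β : List T) (t u : T) (M : S → ℕ),
    σ = α ++ t :: u :: β ∧ ρ = α ++ u :: t :: β ∧
    N.FiresList N.M0 α M ∧ N.Enabled2 t u M ∧ N.FS σ ∧ N.FS ρ

/-- adjacency `≡₀` on possibly infinite firing sequences -/
def AdjSeq (σ ρ : Stream'.Seq T) : Prop :=
  ∃ (α : List T) (β : Stream'.Seq T) (t u : T) (M : S → ℕ),
    σ = (Stream'.Seq.ofList (α ++ [t, u])).append β ∧
    ρ = (Stream'.Seq.ofList (α ++ [u, t])).append β ∧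
    N.FiresList N.M0 α M ∧ N.Enabled2 t u M ∧ N.FSInf σ ∧ N.FSInf ρ

end Net

/-- the finite sequence `l` is a prefix of the possibly infinite sequence `s` -/
def ListPrefixSeq {T : Type} (l : List T) (s : Stream'.Seq T) : Prop :=
  s.take l.length = l

namespace Net

variable {S T : Type} (N : Net S T)

/-- the preorder `⊑₀^∞` on possibly infinite firing sequences -/
def Sqsubseteq0 (σ ρ : Stream'.Seq T) : Prop :=
  ∀ σ'' : List T, N.FS σ'' → ListPrefixSeq σ'' σ →
    ∃ σ' ρ' : List T, N.FS σ' ∧ N.FS ρ' ∧ σ'' <+: σ' ∧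
      ReflTransGen N.Adj σ' ρ' ∧ ListPrefixSeq ρ' ρ

end Net

/-- the data of a candidate GR-process: an occurrence net labelled over `N`,
with process places drawn from `PS` and process transitions from `PT`. -/
structure GRProcessData (S T PS PT : Type) where
  places : Set PS
  trans : Set PT
  /-- `preRel s t`: there is an arc from place `s` to transition `t` -/
  preRel : PS → PT → Prop
  /-- `postRel t s`: there is an arc from transition `t` to place `s` -/
  postRel : PT → PS → Prop
  piS : PS → S
  piT : PT → T

namespace GRProcessData

variable {S T PS PT : Type}

/-- the flow relation of the occurrence net -/
def flow (P : GRProcessData S T PS PT) : (PS ⊕ PT) → (PS ⊕ PT) → Prop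
  | Sum.inl s, Sum.inr t => P.preRel s t
  | Sum.inr t, Sum.inl s => P.postRel t s
  | _, _ => False

/-- the places with empty preset, carrying the initial marking -/
def initialPlaces (P : GRProcessData S T PS PT) : Set PS :=
  {s | s ∈ P.places ∧ ∀ t, ¬ P.postRel t s}

/-- `P` is a GR-process of the net `N` -/
structure IsGRProcess (N : Net S T) (P : GRProcessData S T PS PT) : Prop where
  pre_support : ∀ s t, P.preRel s t → s ∈ P.places ∧ t ∈ P.trans
  post_support : ∀ t s, P.postRel t s → s ∈ P.places ∧ t ∈ P.trans
  place_pre_unique : ∀ s t t', P.postRel t s → P.postRel t' s → t = t'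
  place_post_unique : ∀ s t t', P.preRel s t → P.preRel s t' → t = t'
  acyclic : ∀ x, ¬ Relation.TransGen P.flow x x
  fin_causes : ∀ u ∈ P.trans, {t : PT | Relation.TransGen P.flow (Sum.inr t) (Sum.inr u)}.Finite
  init_marking : ∀ a : S, ({s | s ∈ P.initialPlaces ∧ P.piS s = a}).Finite ∧
    N.M0 a = Set.ncard {s | s ∈ P.initialPlaces ∧ P.piS s = a}
  pre_match : ∀ t ∈ P.trans, ∀ a : S, ({s | P.preRel s t ∧ P.piS s = a}).Finite ∧
    N.pre (P.piT t) a = Set.ncard {s | P.preRel s t ∧ P.piS s = a}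
  post_match : ∀ t ∈ P.trans, ∀ a : S, ({s | P.postRel t s ∧ P.piS s = a}).Finite ∧
    N.post (P.piT t) a = Set.ncard {s | P.postRel t s ∧ P.piS s = a}

/-- `P''` is a prefix of `P'` -/
def IsPrefixOf (P'' P' : GRProcessData S T PS PT) : Prop :=
  P''.places ⊆ P'.places ∧ P''.trans ⊆ P'.trans ∧
  (∀ s ∈ P''.places, ∀ t ∈ P''.trans,
    (P''.preRel s t ↔ P'.preRel s t) ∧ (P''.postRel t s ↔ P'.postRel t s)) ∧
  (∀ s ∈ P''.places, P''.piS s = P'.piS s) ∧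
  (∀ t ∈ P''.trans, P''.piT t = P'.piT t) ∧
  P''.initialPlaces = P'.initialPlaces

/-- a process `P` is compatible with the (possibly infinite) transition
sequence `σ` via an order-respecting bijection `pos`. -/
def Compatible (P : GRProcessData S T PS PT) (σ : Stream'.Seq T) : Prop :=
  ∃ pos : PT → ℕ,
    (∀ t ∈ P.trans, σ.get? (pos t) = some (P.piT t)) ∧
    (∀ t ∈ P.trans, ∀ u ∈ P.trans, pos t = pos u → t = u) ∧
    (∀ i, (σ.get? i).isSome → ∃ t ∈ P.trans, pos t = i) ∧
    (∀ t ∈ P.trans, ∀ u ∈ P.trans,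
      Relation.TransGen P.flow (Sum.inr t) (Sum.inr u) → pos t < pos u)

end GRProcessData


section Aux

variable {S T PS PT : Type}

namespace Net

lemma firesList_concat (N : Net S T) {M M₁ M₂ : S → ℕ} {σ : List T} {t : T}
    (h1 : N.FiresList M σ M₁) (h2 : N.Fires t M₁ M₂) :
    N.FiresList M (σ ++ [t]) M₂ := by
  induction h1 with
  | nil M => exact FiresList.cons h2 (FiresList.nil _)
  | cons hf _ ih => exact FiresList.cons hf (ih h2)

end Net

namespace GRProcessData

/-- the marking after firing the downward-closed set `G` of process transitions -/
def cutSet (P : GRProcessData S T PS PT) (G : Set PT) (a : S) : Set PS :=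
  {s | s ∈ P.places ∧ (∀ w, P.postRel w s → w ∈ G) ∧
    (∀ v, P.preRel s v → v ∉ G) ∧ P.piS s = a}

lemma cutSet_finite {N : Net S T} {P : GRProcessData S T PS PT}
    (hP : P.IsGRProcess N) {G : Set PT} (hGfin : G.Finite) (hGsub : G ⊆ P.trans)
    (a : S) : (P.cutSet G a).Finite := by
  have h1 : (P.cutSet G a) ⊆ {s | s ∈ P.initialPlaces ∧ P.piS s = a} ∪
      ⋃ w ∈ G, {s | P.postRel w s ∧ P.piS s = a} := by
    rintro s ⟨hpl, hprod, _, hpi⟩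
    by_cases h : ∃ w, P.postRel w s
    · obtain ⟨w, hw⟩ := h
      exact Or.inr (Set.mem_biUnion (hprod w hw) ⟨hw, hpi⟩)
    · push_neg at h
      exact Or.inl ⟨⟨hpl, h⟩, hpi⟩
  exact ((hP.init_marking a).1.union
    (hGfin.biUnion fun w hw => (hP.post_match w (hGsub hw) a).1)).subset h1

/-- firing a compatible linearisation of a finite downward-closed set `G` of
process transitions of a GR-process leads from the initial marking to the cut
marking of `G`. -/
lemma cut_firesList (N : Net S T) (P : GRProcessData S T PS PT)
    (hP : P.IsGRProcess N) :
    ∀ (σ : List T) (G : Set PT) (pos : PT → ℕ),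
    G ⊆ P.trans →
    (∀ u ∈ P.trans, ∀ v ∈ G, Relation.TransGen P.flow (.inr u) (.inr v) → u ∈ G) →
    (∀ u ∈ G, σ[pos u]? = some (P.piT u)) →
    (∀ u ∈ G, ∀ v ∈ G, pos u = pos v → u = v) →
    (∀ i, i < σ.length → ∃ u ∈ G, pos u = i) →
    (∀ u ∈ G, ∀ v ∈ G, Relation.TransGen P.flow (.inr u) (.inr v) → pos u < pos v) →
    N.FiresList N.M0 σ (fun a => (P.cutSet G a).ncard) := by
  intro σ
  induction σ using List.reverseRecOn with
  | nil =>
    intro G pos hsub hdc hlab hinj hsurj hord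
    have hGem : ∀ u, u ∉ G := by
      intro u hu
      have := hlab u hu
      simp at this
    have hcut : (fun a => (P.cutSet G a).ncard) = N.M0 := by
      funext a
      have hset : P.cutSet G a = {s | s ∈ P.initialPlaces ∧ P.piS s = a} := by
        ext s
        constructor
        · rintro ⟨hpl, hprod, _, hpi⟩
          exact ⟨⟨hpl, fun t ht => hGem t (hprod t ht)⟩, hpi⟩
        · rintro ⟨⟨hpl, hnoprod⟩, hpi⟩
          exact ⟨hpl, fun w hw => absurd hw (hnoprod w),
            fun v _ hv => hGem v hv, hpi⟩
      rw [hset, ← (hP.init_marking a).2]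
    rw [hcut]
    exact Net.FiresList.nil _
  | append_singleton l b ih =>
    intro G pos hsub hdc hlab hinj hsurj hord
    obtain ⟨t, htG, hpt⟩ := hsurj l.length (by simp)
    have httr : t ∈ P.trans := hsub htG
    have hbt : b = P.piT t := by
      have := hlab t htG
      rw [hpt, List.getElem?_concat_length] at this
      exact Option.some_injective _ this
    have hposlt : ∀ u ∈ G, u ≠ t → pos u < l.length := by
      intro u hu hne
      have h1 := hlab u hu
      rw [List.getElem?_eq_some_iff] at h1
      obtain ⟨h1, _⟩ := h1
      simp only [List.length_append, List.length_singleton] at h1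
      rcases Nat.lt_succ_iff_lt_or_eq.1 h1 with h | h
      · exact h
      · exact absurd (hinj u hu t htG (h.trans hpt.symm)) hne
    -- the set with `t` removed
    set G₁ : Set PT := G \ {t} with hG₁
    have hG₁sub : G₁ ⊆ G := Set.diff_subset
    have hGfin : G.Finite := by
      apply Set.Finite.of_finite_image (f := pos)
      · apply (Set.finite_Iio (l.length + 1)).subset
        rintro i ⟨u, hu, rfl⟩
        have h1 := hlab u hu
        rw [List.getElem?_eq_some_iff] at h1
        obtain ⟨h1, _⟩ := h1
        simpa using h1
      · intro u hu v hv h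
        exact hinj u hu v hv h
    have hflow2 : ∀ {w s v}, P.postRel w s → P.preRel s v →
        Relation.TransGen P.flow (.inr w) (.inr v) := by
      intro w s v h1 h2
      exact Relation.TransGen.head (show P.flow (Sum.inr w) (Sum.inl s) from h1)
        (Relation.TransGen.single (show P.flow (Sum.inl s) (Sum.inr v) from h2))
    -- IH applies to l and G₁
    have hIH := ih G₁ pos (fun u hu => hsub (hG₁sub hu))
      (by
        intro u hu v hv hf
        refine ⟨hdc u hu v hv.1 hf, ?_⟩
        intro hut
        rw [Set.mem_singleton_iff] at hut
        subst hut
        have h1 := hord u htG v hv.1 hf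
        have h2 := hposlt v hv.1 (by simpa using hv.2)
        omega)
      (by
        intro u hu
        have h1 := hposlt u hu.1 (by simpa using hu.2)
        rw [← List.getElem?_append_left h1]
        exact hlab u hu.1)
      (fun u hu v hv h => hinj u hu.1 v hv.1 h)
      (by
        intro i hi
        obtain ⟨u, hu, hpu⟩ := hsurj i (by simp; omega)
        refine ⟨u, ⟨hu, ?_⟩, hpu⟩
        simp only [Set.mem_singleton_iff]
        rintro rfl
        omega)
      (fun u hu v hv h => hord u hu.1 v hv.1 h)
    -- key sets
    set A : S → Set PS := fun a => P.cutSet G₁ a with hA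
    set B : S → Set PS := fun a => {s | P.preRel s t ∧ P.piS s = a} with hB
    set C : S → Set PS := fun a => {s | P.postRel t s ∧ P.piS s = a} with hC
    have hBA : ∀ a, B a ⊆ A a := by
      rintro a s ⟨hst, hpi⟩
      refine ⟨(hP.pre_support s t hst).1, ?_, ?_, hpi⟩
      · intro w hw
        have hw' : w ∈ G := hdc w (hP.post_support w s hw).2 t htG (hflow2 hw hst)
        refine ⟨hw', ?_⟩
        simp only [Set.mem_singleton_iff]
        rintro rfl
        exact hP.acyclic _ (hflow2 hw hst)
      · intro v hv hvG₁
        have : v = t := hP.place_post_unique s v t hv hst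
        subst this
        exact hvG₁.2 rfl
    have hCA : ∀ a, ∀ s ∈ C a, s ∉ A a := by
      rintro a s ⟨hts, _⟩ ⟨_, hprod, _, _⟩
      have := hprod t hts
      simp [hG₁] at this
    have hsplit : ∀ a, P.cutSet G a = (A a \ B a) ∪ C a := by
      intro a
      ext s
      constructor
      · rintro ⟨hpl, hprod, hcons, hpi⟩
        by_cases hts : P.postRel t s
        · exact Or.inr ⟨hts, hpi⟩
        · refine Or.inl ⟨⟨hpl, ?_, ?_, hpi⟩, ?_⟩
          · intro w hw
            refine ⟨hprod w hw, ?_⟩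
            simp only [Set.mem_singleton_iff]
            rintro rfl
            exact hts hw
          · intro v hv hvG₁
            exact hcons v hv hvG₁.1
          · rintro ⟨hst, _⟩
            exact hcons t hst htG
      · rintro (⟨⟨hpl, hprod, hcons, hpi⟩, hsB⟩ | ⟨hts, hpi⟩)
        · refine ⟨hpl, fun w hw => (hprod w hw).1, ?_, hpi⟩
          intro v hv hvG
          by_cases hvt : v = t
          · subst hvt
            exact hsB ⟨hv, hpi⟩
          · exact hcons v hv ⟨hvG, by simpa using hvt⟩
        · refine ⟨(hP.post_support t s hts).1, ?_, ?_, hpi⟩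
          · intro w hw
            have : w = t := hP.place_pre_unique s w t hw hts
            subst this
            exact htG
          · intro v hv hvG
            have hf := hflow2 hts hv
            have h1 := hord t htG v hvG hf
            have hvt : v ≠ t := by
              rintro rfl
              exact hP.acyclic _ hf
            have h2 := hposlt v hvG hvt
            omega
    have hAfin : ∀ a, (A a).Finite :=
      fun a => cutSet_finite hP (hGfin.subset hG₁sub)
        (fun u hu => hsub (hG₁sub hu)) a
    have hBfin : ∀ a, (B a).Finite := fun a => (hP.pre_match t httr a).1
    have hCfin : ∀ a, (C a).Finite := fun a => (hP.post_match t httr a).1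
    subst hbt
    refine N.firesList_concat hIH ⟨?_, ?_⟩
    · intro a
      rw [(hP.pre_match t httr a).2]
      exact Set.ncard_le_ncard (hBA a) (hAfin a)
    · funext a
      rw [(hP.pre_match t httr a).2, (hP.post_match t httr a).2, hsplit a]
      rw [Set.ncard_union_eq (by
          rw [Set.disjoint_left]
          intro s hs hsC
          exact hCA a s hsC hs.1) ((hAfin a).diff) (hCfin a),
        Set.ncard_diff (hBA a) (hBfin a)]

lemma extend_lemma (N : Net S T) (P : GRProcessData S T PS PT)
    (hP : P.IsGRProcess N) (hfin : P.trans.Finite) :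
    ∀ (n : ℕ) (σ : List T) (G : Set PT) (pos : PT → ℕ),
    (P.trans \ G).ncard = n → G ⊆ P.trans →
    (∀ u ∈ P.trans, ∀ v ∈ G, Relation.TransGen P.flow (.inr u) (.inr v) → u ∈ G) →
    (∀ u ∈ G, σ[pos u]? = some (P.piT u)) →
    (∀ u ∈ G, ∀ v ∈ G, pos u = pos v → u = v) →
    (∀ i, i < σ.length → ∃ u ∈ G, pos u = i) →
    (∀ u ∈ G, ∀ v ∈ G, Relation.TransGen P.flow (.inr u) (.inr v) → pos u < pos v) →
    ∃ σ₀ : List T, N.FS σ₀ ∧ σ <+: σ₀ ∧ P.Compatible (Stream'.Seq.ofList σ₀) := by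
  intro n
  induction n with
  | zero =>
    intro σ G pos hn hsub hdc hlab hinj hsurj hord
    have hGeq : G = P.trans := by
      have h1 : (P.trans \ G) = ∅ :=
        (Set.ncard_eq_zero (hfin.subset Set.diff_subset)).1 hn
      exact Set.Subset.antisymm hsub (Set.diff_eq_empty.1 h1)
    subst hGeq
    refine ⟨σ, ⟨_, cut_firesList N P hP σ P.trans pos hsub hdc hlab hinj hsurj hord⟩,
      List.prefix_refl _, pos, ?_, hinj, ?_, hord⟩
    · intro u hu
      exact hlab u hu
    · intro i hi
      have h2 : (σ[i]?).isSome := hi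
      rw [Option.isSome_iff_exists] at h2
      obtain ⟨x, hx⟩ := h2
      rw [List.getElem?_eq_some_iff] at hx
      exact hsurj i hx.1
  | succ n ihn =>
    intro σ G pos hn hsub hdc hlab hinj hsurj hord
    classical
    have hRfin : (P.trans \ G).Finite := hfin.subset Set.diff_subset
    have hRne : (P.trans \ G).Nonempty := Set.nonempty_of_ncard_ne_zero (by omega)
    obtain ⟨t, htR, htmin⟩ := Set.Finite.exists_minimalFor
      (fun u => {w ∈ P.trans \ G |
        Relation.TransGen P.flow (.inr w) (.inr u)}.ncard)
      (P.trans \ G) hRfin hRne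
    have htG : t ∉ G := htR.2
    have hmin2 : ∀ u ∈ P.trans,
        Relation.TransGen P.flow (.inr u) (.inr t) → u ∈ G := by
      intro u hu hf
      by_contra huG
      have huR : u ∈ P.trans \ G := ⟨hu, huG⟩
      have hss : {w ∈ P.trans \ G | Relation.TransGen P.flow (.inr w) (.inr u)} ⊂
          {w ∈ P.trans \ G | Relation.TransGen P.flow (.inr w) (.inr t)} := by
        constructor
        · rintro w ⟨hwR, hw⟩
          exact ⟨hwR, hw.trans hf⟩
        · intro hsup
          have h2 := hsup ⟨huR, hf⟩
          exact hP.acyclic _ h2.2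
      have hlt := Set.ncard_lt_ncard hss (hRfin.subset (Set.sep_subset _ _))
      have h3 := htmin huR (le_of_lt hlt)
      simp only at h3
      omega
    have hposlt : ∀ u ∈ G, pos u < σ.length := by
      intro u hu
      have h1 := hlab u hu
      rw [List.getElem?_eq_some_iff] at h1
      exact h1.1
    set G' : Set PT := insert t G with hG'
    set pos' : PT → ℕ := Function.update pos t σ.length with hpos'
    have hpos'G : ∀ u ∈ G, pos' u = pos u := by
      intro u hu
      exact Function.update_of_ne (by rintro rfl; exact htG hu) _ _
    have hpos't : pos' t = σ.length := Function.update_self _ _ _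
    have hsetEq : P.trans \ G' = (P.trans \ G) \ {t} := by
      ext x
      simp only [hG', Set.mem_diff, Set.mem_insert_iff, Set.mem_singleton_iff]
      tauto
    have hn' : (P.trans \ G').ncard = n := by
      rw [hsetEq, Set.ncard_diff_singleton_of_mem htR]
      omega
    obtain ⟨σ₀, hFS, hpre0, hc⟩ := ihn (σ ++ [P.piT t]) G' pos' hn'
      (Set.insert_subset htR.1 hsub)
      (by
        intro u hu v hv hf
        rcases Set.mem_insert_iff.1 hv with h2 | h2
        · subst h2
          exact Set.mem_insert_iff.2 (Or.inr (hmin2 u hu hf))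
        · exact Set.mem_insert_iff.2 (Or.inr (hdc u hu v h2 hf)))
      (by
        intro u hu
        rcases Set.mem_insert_iff.1 hu with h1 | h1
        · subst h1
          rw [hpos't, List.getElem?_concat_length]
        · rw [hpos'G u h1, List.getElem?_append_left (hposlt u h1)]
          exact hlab u h1)
      (by
        intro u hu v hv h
        rcases Set.mem_insert_iff.1 hu with h1 | h1 <;>
          rcases Set.mem_insert_iff.1 hv with h2 | h2
        · rw [h1, h2]
        · subst h1
          rw [hpos't, hpos'G v h2] at h
          exact absurd h.symm (Nat.ne_of_lt (hposlt v h2))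
        · subst h2
          rw [hpos't, hpos'G u h1] at h
          exact absurd h (Nat.ne_of_lt (hposlt u h1))
        · exact hinj u h1 v h2 (by rwa [hpos'G u h1, hpos'G v h2] at h))
      (by
        intro i hi
        simp only [List.length_append, List.length_singleton] at hi
        rcases Nat.lt_succ_iff_lt_or_eq.1 hi with h | h
        · obtain ⟨u, hu, hpu⟩ := hsurj i h
          exact ⟨u, Set.mem_insert_iff.2 (Or.inr hu),
            by rw [hpos'G u hu]; exact hpu⟩
        · exact ⟨t, Set.mem_insert _ _, by rw [hpos't, h]⟩)
      (by
        intro u hu v hv hf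
        rcases Set.mem_insert_iff.1 hu with h1 | h1 <;>
          rcases Set.mem_insert_iff.1 hv with h2 | h2
        · subst h1
          subst h2
          exact absurd hf (hP.acyclic _)
        · rw [h1] at hf
          exact absurd (hdc t htR.1 v h2 hf) htG
        · subst h2
          rw [hpos'G u h1, hpos't]
          exact hposlt u h1
        · rw [hpos'G u h1, hpos'G v h2]
          exact hord u h1 v h2 hf)
    exact ⟨σ₀, hFS, (List.prefix_append σ [P.piT t]).trans hpre0, hc⟩

/-- in a prefix, presets and postsets of retained transitions are unchanged -/
lemma prefix_rel_eq {N : Net S T} {P'' P' : GRProcessData S T PS PT}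
    (hP'' : P''.IsGRProcess N) (hP' : P'.IsGRProcess N)
    (hpre : P''.IsPrefixOf P') :
    ∀ u ∈ P''.trans, (∀ s, P''.preRel s u ↔ P'.preRel s u) ∧
      (∀ s, P''.postRel u s ↔ P'.postRel u s) := by
  obtain ⟨hplsub, htrsub, hrel, hpiS, hpiT, hinit⟩ := hpre
  intro u hu
  constructor
  · intro s
    constructor
    · intro h
      exact (hrel s (hP''.pre_support s u h).1 u hu).1.1 h
    · intro h
      set a := P'.piS s with ha
      have hAB : {x | P''.preRel x u ∧ P''.piS x = a} ⊆
          {x | P'.preRel x u ∧ P'.piS x = a} := by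
        rintro x ⟨hx, hxa⟩
        have hxpl : x ∈ P''.places := (hP''.pre_support x u hx).1
        exact ⟨(hrel x hxpl u hu).1.1 hx, by rw [← hpiS x hxpl]; exact hxa⟩
      have hcard : {x | P'.preRel x u ∧ P'.piS x = a}.ncard ≤
          {x | P''.preRel x u ∧ P''.piS x = a}.ncard := by
        rw [← (hP'.pre_match u (htrsub hu) a).2, ← (hP''.pre_match u hu a).2,
          hpiT u hu]
      have heq := Set.eq_of_subset_of_ncard_le hAB hcard
        (hP'.pre_match u (htrsub hu) a).1
      have hmem : s ∈ {x | P'.preRel x u ∧ P'.piS x = a} := ⟨h, rfl⟩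
      rw [← heq] at hmem
      exact hmem.1
  · intro s
    constructor
    · intro h
      exact (hrel s (hP''.post_support u s h).1 u hu).2.1 h
    · intro h
      set a := P'.piS s with ha
      have hAB : {x | P''.postRel u x ∧ P''.piS x = a} ⊆
          {x | P'.postRel u x ∧ P'.piS x = a} := by
        rintro x ⟨hx, hxa⟩
        have hxpl : x ∈ P''.places := (hP''.post_support u x hx).1
        exact ⟨(hrel x hxpl u hu).2.1 hx, by rw [← hpiS x hxpl]; exact hxa⟩
      have hcard : {x | P'.postRel u x ∧ P'.piS x = a}.ncard ≤
          {x | P''.postRel u x ∧ P''.piS x = a}.ncard := by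
        rw [← (hP'.post_match u (htrsub hu) a).2, ← (hP''.post_match u hu a).2,
          hpiT u hu]
      have heq := Set.eq_of_subset_of_ncard_le hAB hcard
        (hP'.post_match u (htrsub hu) a).1
      have hmem : s ∈ {x | P'.postRel u x ∧ P'.piS x = a} := ⟨h, rfl⟩
      rw [← heq] at hmem
      exact hmem.1

/-- causal paths of `P'` ending in the prefix `P''` lie entirely in `P''` -/
lemma prefix_flow_back {N : Net S T} {P'' P' : GRProcessData S T PS PT}
    (hP'' : P''.IsGRProcess N) (hP' : P'.IsGRProcess N)
    (hpre : P''.IsPrefixOf P') :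
    ∀ x y, Relation.TransGen P'.flow x y →
      (match y with | .inl s => s ∈ P''.places | .inr v => v ∈ P''.trans) →
      (match x with | .inl s => s ∈ P''.places | .inr v => v ∈ P''.trans) ∧
        Relation.TransGen P''.flow x y := by
  have hstep : ∀ x y, P'.flow x y →
      (match y with | .inl s => s ∈ P''.places | .inr v => v ∈ P''.trans) →
      (match x with | .inl s => s ∈ P''.places | .inr v => v ∈ P''.trans) ∧
        P''.flow x y := by
    intro x y hxy hQ
    match x, y with
    | .inl s, .inr v =>
      have h' : P'.preRel s v := hxy
      have h'' : P''.preRel s v :=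
        ((prefix_rel_eq hP'' hP' hpre v hQ).1 s).2 h'
      exact ⟨(hP''.pre_support s v h'').1, h''⟩
    | .inr w, .inl s =>
      have h' : P'.postRel w s := hxy
      have hex : ∃ w', P''.postRel w' s := by
        by_contra hno
        push_neg at hno
        have hsinit : s ∈ P''.initialPlaces := ⟨hQ, hno⟩
        rw [hpre.2.2.2.2.2] at hsinit
        exact hsinit.2 w h'
      obtain ⟨w', hw'⟩ := hex
      have hw'tr : w' ∈ P''.trans := (hP''.post_support w' s hw').2
      have h2 : P'.postRel w' s :=
        ((prefix_rel_eq hP'' hP' hpre w' hw'tr).2 s).1 hw'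
      have hww : w = w' := hP'.place_pre_unique s w w' h' h2
      subst hww
      exact ⟨hw'tr, hw'⟩
    | .inl _, .inl _ => exact (hxy : False).elim
    | .inr _, .inr _ => exact (hxy : False).elim
  intro x y hxy
  induction hxy with
  | single h =>
    intro hQ
    exact ⟨(hstep _ _ h hQ).1, Relation.TransGen.single (hstep _ _ h hQ).2⟩
  | tail hxb hby ih =>
    intro hQ
    obtain ⟨hQb, hf⟩ := hstep _ _ hby hQ
    obtain ⟨hQx, htg⟩ := ih hQb
    exact ⟨hQx, htg.tail hf⟩

end GRProcessData

end Aux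

theorem prefix_up_GR {S T PS PT : Type} (N : Net S T)
    (P'' P' : GRProcessData S T PS PT)
    (hP'' : GRProcessData.IsGRProcess N P'')
    (hP' : GRProcessData.IsGRProcess N P')
    (hfin'' : P''.trans.Finite) (hfin' : P'.trans.Finite)
    (hpre : P''.IsPrefixOf P')
    (σ'' : List T) (h'' : N.FS σ'')
    (hcomp : P''.Compatible (Stream'.Seq.ofList σ'')) :
    ∃ σ₀ : List T, N.FS σ₀ ∧ σ'' <+: σ₀ ∧
      P'.Compatible (Stream'.Seq.ofList σ₀) := by
  obtain ⟨pos, hlab, hinj, hsurj, hord⟩ := hcomp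
  have hback := GRProcessData.prefix_flow_back hP'' hP' hpre
  refine GRProcessData.extend_lemma N P' hP' hfin'
    ((P'.trans \ P''.trans).ncard) σ'' P''.trans pos rfl hpre.2.1
    ?_ ?_ hinj ?_ ?_
  · intro u hu v hv hf
    exact (hback (Sum.inr u) (Sum.inr v) hf hv).1
  · intro u hu
    have h1 : (Stream'.Seq.ofList σ'').get? (pos u) = some (P''.piT u) :=
      hlab u hu
    rw [hpre.2.2.2.2.1 u hu] at h1
    exact h1
  · intro i hi
    apply hsurj i
    have h2 : σ''[i]? = some (σ''[i]) := List.getElem?_eq_getElem hi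
    exact Option.isSome_iff_exists.2 ⟨_, h2⟩
  · intro u hu v hv hf
    exact hord u hu v hv (hback (Sum.inr u) (Sum.inr v) hf hv).2
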